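/- Let L be the Laplacian of a connected graph G on n vertices, L̂ real symmetric with zero row and column sums, and L_w = L + L̂ ε. If X is a real {1}-inverse of L (LXL = L), then X - X L̂ X ε is a {1}-inverse of L_w, i.e., L_w (X - X L̂ X ε) L_w = L_w. -/

import Mathlib

open Matrix Finset



lemma lap_range {n : ℕ} (hn : 0 < n) (G : SimpleGraph (Fin n)) [DecidableRel G.Adj]
    (hG : G.Connected) (v : Fin n → ℝ) (hv : ∑ i, v i = 0) :
    ∃ u, G.lapMatrix ℝ *ᵥ u = v := by
  classical
  set L := G.lapMatrix ℝ with hL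
  set F := L.mulVecLin with hF
  set S : (Fin n → ℝ) →ₗ[ℝ] ℝ := ∑ i, LinearMap.proj i with hS
  have hSapp : ∀ w : Fin n → ℝ, S w = ∑ i, w i := by
    intro w; simp [hS]
  have i0 : Fin n := ⟨0, hn⟩
  have hone : (fun _ => (1:ℝ)) ≠ (0 : Fin n → ℝ) := by
    intro h; exact one_ne_zero (congrFun h i0)
  have hker : LinearMap.ker F = Submodule.span ℝ {fun _ => (1:ℝ)} := by
    ext x
    constructor
    · intro hx
      have hx' : Matrix.toLin' L x = 0 := by
        simpa [Matrix.toLin'_apply, hF] using hx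
      have := (G.lapMatrix_mulVec_eq_zero_iff_forall_reachable (x := x)).mp (by simpa [Matrix.toLin'_apply] using hx')
      have hx2 : x = (x i0) • (fun _ => (1:ℝ)) := by
        funext i
        simp [this i i0 (hG.preconnected i i0)]
      rw [hx2]
      exact Submodule.smul_mem _ _ (Submodule.mem_span_singleton_self _)
    · intro hx
      obtain ⟨c, rfl⟩ := Submodule.mem_span_singleton.mp hx
      have : F ((fun _ => (1:ℝ))) = 0 := by
        simpa [hF, hL] using G.lapMatrix_mulVec_const_eq_zero (R := ℝ)
      simp [LinearMap.mem_ker, _root_.map_smul, this]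
  have hkerrank : Module.finrank ℝ (LinearMap.ker F) = 1 := by
    rw [hker, finrank_span_singleton hone]
  have hrange1 : Module.finrank ℝ (LinearMap.range F) = n - 1 := by
    have := LinearMap.finrank_range_add_finrank_ker F
    rw [hkerrank, Module.finrank_pi, Fintype.card_fin] at this
    omega
  have hcolsum : ∀ j, ∑ i, L i j = 0 := by
    intro j
    have hsymL : Lᵀ = L := G.isSymm_lapMatrix ℝ
    have := congrFun (G.lapMatrix_mulVec_const_eq_zero (R := ℝ)) j
    simp only [mulVec, dotProduct, mul_one, Pi.zero_apply] at this
    calc ∑ i, L i j = ∑ i, Lᵀ j i := by simp [Matrix.transpose_apply]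
    _ = ∑ i, L j i := by rw [hsymL]
    _ = 0 := this
  have hle : LinearMap.range F ≤ LinearMap.ker S := by
    rintro _ ⟨u, rfl⟩
    simp only [LinearMap.mem_ker, hSapp, hF, Matrix.mulVecLin_apply, mulVec, dotProduct]
    rw [Finset.sum_comm]
    simp [← Finset.sum_mul, hcolsum]
  have hSsurj : LinearMap.range S = ⊤ := by
    rw [LinearMap.range_eq_top]
    intro r
    refine ⟨fun _ => r / n, ?_⟩
    rw [hSapp, Finset.sum_const, Finset.card_univ, Fintype.card_fin, nsmul_eq_mul]
    field_simp [(Nat.cast_pos.mpr hn : (0:ℝ) < n).ne']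
  have hSker : Module.finrank ℝ (LinearMap.ker S) = n - 1 := by
    have := LinearMap.finrank_range_add_finrank_ker S
    rw [hSsurj, Module.finrank_pi, Fintype.card_fin] at this
    simp only [finrank_top, Module.finrank_self] at this
    omega
  have heq : LinearMap.range F = LinearMap.ker S :=
    Submodule.eq_of_le_of_finrank_le hle (by rw [hrange1, hSker])
  have hv' : v ∈ LinearMap.ker S := by rw [LinearMap.mem_ker, hSapp]; exact hv
  rw [← heq] at hv'
  obtain ⟨u, hu⟩ := hv'
  exact ⟨u, hu⟩


lemma col_fix {n : ℕ} (hn : 0 < n) (G : SimpleGraph (Fin n)) [DecidableRel G.Adj]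
    (hG : G.Connected) (Lhat : Matrix (Fin n) (Fin n) ℝ)
    (hcol : (fun _ => (1 : ℝ)) ᵥ* Lhat = 0)
    (Y : Matrix (Fin n) (Fin n) ℝ)
    (hY : G.lapMatrix ℝ * Y * G.lapMatrix ℝ = G.lapMatrix ℝ) :
    G.lapMatrix ℝ * Y * Lhat = Lhat := by
  set L := G.lapMatrix ℝ with hL
  ext i j
  have hsum : ∑ k, Lhat k j = 0 := by
    have := congrFun hcol j
    simpa [vecMul, dotProduct] using this
  obtain ⟨u, hu⟩ := lap_range hn G hG (fun k => Lhat k j) hsum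
  have h1 : (L * Y * Lhat) i j = ((L * Y) *ᵥ fun k => Lhat k j) i := by
    simp [Matrix.mul_apply, mulVec, dotProduct]
  rw [h1, ← hu, Matrix.mulVec_mulVec, hY, hu]
/-- The dual matrix `A_s + A_d ε` built from its standard and infinitesimal parts. -/
def dm {m n : Type*} (A B : Matrix m n ℝ) : Matrix m n (DualNumber ℝ) :=
  Matrix.of fun i j => TrivSqZeroExt.inl (A i j) + TrivSqZeroExt.inr (B i j)

lemma dm_mul {m p q : Type*} [Fintype p] (A B : Matrix m p ℝ) (C D : Matrix p q ℝ) :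
    dm A B * dm C D = dm (A * C) (A * D + B * C) := by
  ext i j <;>
    simp [dm, Matrix.mul_apply, TrivSqZeroExt.fst_sum, TrivSqZeroExt.snd_sum,
      Finset.sum_add_distrib, mul_comm]

/-- If `X` is a real `{1}`-inverse of the Laplacian `L` of a connected graph and `L̂` is
symmetric with zero row and column sums, then `X - X L̂ X ε` is a `{1}`-inverse of
`L_w = L + L̂ ε`. -/
theorem dual_laplacian_one_inverse {n : ℕ} (hn : 0 < n)
    (G : SimpleGraph (Fin n)) [DecidableRel G.Adj] (hG : G.Connected)
    (Lhat : Matrix (Fin n) (Fin n) ℝ) (hsym : Lhatᵀ = Lhat)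
    (hrow : Lhat *ᵥ (fun _ => (1 : ℝ)) = 0)
    (hcol : (fun _ => (1 : ℝ)) ᵥ* Lhat = 0)
    (X : Matrix (Fin n) (Fin n) ℝ)
    (hX : G.lapMatrix ℝ * X * G.lapMatrix ℝ = G.lapMatrix ℝ) :
    dm (G.lapMatrix ℝ) Lhat * dm X (-(X * Lhat * X)) * dm (G.lapMatrix ℝ) Lhat
      = dm (G.lapMatrix ℝ) Lhat := by
  set L := G.lapMatrix ℝ with hL
  have hsymL : Lᵀ = L := G.isSymm_lapMatrix ℝ
  have e1 : L * X * Lhat = Lhat := col_fix hn G hG Lhat hcol X hX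
  have hXT : L * Xᵀ * L = L := by
    have := congrArg Matrix.transpose hX
    simpa [Matrix.transpose_mul, hsymL, Matrix.mul_assoc] using this
  have e2 : Lhat * X * L = Lhat := by
    have h3 : L * Xᵀ * Lhat = Lhat := col_fix hn G hG Lhat hcol Xᵀ hXT
    have := congrArg Matrix.transpose h3
    simpa [Matrix.transpose_mul, hsymL, hsym, Matrix.mul_assoc] using this
  have h3 : L * (X * Lhat * X) * L = Lhat := by
    calc L * (X * Lhat * X) * L = L * X * Lhat * (X * L) := by noncomm_ring
    _ = Lhat * (X * L) := by rw [e1]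
    _ = Lhat := by rw [← Matrix.mul_assoc, e2]
  have key : L * X * Lhat + (L * -(X * Lhat * X) + Lhat * X) * L = Lhat := by
    calc L * X * Lhat + (L * -(X * Lhat * X) + Lhat * X) * L
        = L * X * Lhat + (Lhat * X * L - L * (X * Lhat * X) * L) := by noncomm_ring
    _ = Lhat := by rw [e1, e2, h3]; abel
  rw [dm_mul, dm_mul, hX, key]
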